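/- arXiv:1412.8721 — 2 statements merged into one kernel-verified Lean document; each statement's English description precedes it below -/
import Mathlib

section
/- For 0 ≤ k ≤ n−m and r, s ≥ 0, C(k+m,k) · G_{a,b}(n,k+m;r+s) = Σ_{i=k}^{n−m} C(n,i) · G_{a,b}(i,k;r) · G_{a,b}(n−i,m;s). -/
open Finset

/-- The generalized r-Lah numbers `G_{a,b}(n,k;r)`. -/
def genLah {R : Type*} [CommRing R] (a b : R) (r : ℕ) : ℕ → ℕ → R
  | 0, 0 => 1
  | 0, _ + 1 => 0
  | n + 1, 0 => (a * ((n : R) + (r : R)) + b * (r : R)) * genLah a b r n 0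
  | n + 1, k + 1 => genLah a b r n k +
      (a * (n : R) + b * ((k : R) + 1) + (a + b) * (r : R)) * genLah a b r n (k + 1)

lemma genLah_succ {R : Type*} [CommRing R] (a b : R) (r n k : ℕ) :
    genLah a b r (n + 1) k = (if k = 0 then (0:R) else 1) * genLah a b r n (k - 1) +
      (a * (n:R) + b * (k:R) + (a + b) * (r:R)) * genLah a b r n k := by
  cases k with
  | zero => simp [genLah]; ring
  | succ k => simp [genLah]

lemma genLah_eq_zero {R : Type*} [CommRing R] (a b : R) (r : ℕ) :
    ∀ n k : ℕ, n < k → genLah a b r n k = 0 := by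
  intro n
  induction n with
  | zero => intro k hk; cases k with
    | zero => omega
    | succ k => simp [genLah]
  | succ n ih =>
    intro k hk
    rw [genLah_succ]
    rcases k with _ | k
    · omega
    · simp only [Nat.succ_ne_zero, if_false, Nat.add_sub_cancel]
      rw [ih k (by omega), ih (k+1) (by omega)]
      ring

lemma genLah_sum_step {R : Type*} [CommRing R] (a b : R) (r s n k m : ℕ) :
    ∑ i ∈ range (n + 2), (((n+1).choose i : R)) * genLah a b r i k * genLah a b s (n + 1 - i) m
    = (if k = 0 then (0:R) else 1) *
        ∑ i ∈ range (n + 1), ((n.choose i : R)) * genLah a b r i (k - 1) * genLah a b s (n - i) m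
      + (if m = 0 then (0:R) else 1) *
        ∑ i ∈ range (n + 1), ((n.choose i : R)) * genLah a b r i k * genLah a b s (n - i) (m - 1)
      + (a * (n:R) + b * ((k:R) + (m:R)) + (a + b) * ((r:R) + (s:R))) *
        ∑ i ∈ range (n + 1), ((n.choose i : R)) * genLah a b r i k * genLah a b s (n - i) m := by
  have hD : ∑ i ∈ range (n + 2), ((n.choose i : R)) * genLah a b r i k * genLah a b s (n + 1 - i) m
      = ∑ i ∈ range (n + 1), ((n.choose i : R)) * genLah a b r i k * genLah a b s (n + 1 - i) m := by
    rw [Finset.sum_range_succ]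
    simp
  have hA : ∑ i ∈ range (n + 2), (((n+1).choose i : R)) * genLah a b r i k * genLah a b s (n + 1 - i) m
      = ∑ i ∈ range (n + 1), ((n.choose i : R)) * genLah a b r (i+1) k * genLah a b s (n - i) m
      + ∑ i ∈ range (n + 2), ((n.choose i : R)) * genLah a b r i k * genLah a b s (n + 1 - i) m := by
    rw [Finset.sum_range_succ' (fun i => (((n+1).choose i : R)) * genLah a b r i k * genLah a b s (n + 1 - i) m),
        Finset.sum_range_succ' (fun i => ((n.choose i : R)) * genLah a b r i k * genLah a b s (n + 1 - i) m)]
    have e : ∀ i ∈ range (n+1),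
        (((n+1).choose (i+1) : R)) * genLah a b r (i+1) k * genLah a b s (n + 1 - (i+1)) m
        = ((n.choose i : R)) * genLah a b r (i+1) k * genLah a b s (n - i) m
          + ((n.choose (i+1) : R)) * genLah a b r (i+1) k * genLah a b s (n + 1 - (i+1)) m := by
      intro i _
      have e2 : n + 1 - (i+1) = n - i := by omega
      rw [Nat.choose_succ_succ, e2]
      push_cast
      ring
    rw [Finset.sum_congr rfl e, Finset.sum_add_distrib]
    simp
    ring
  rw [hA, hD]
  have e1 : ∀ i ∈ range (n+1),
      ((n.choose i : R)) * genLah a b r (i+1) k * genLah a b s (n - i) m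
      = (if k = 0 then (0:R) else 1) * (((n.choose i : R)) * genLah a b r i (k-1) * genLah a b s (n - i) m)
        + (a * (i:R) + b * (k:R) + (a+b) * (r:R)) * (((n.choose i : R)) * genLah a b r i k * genLah a b s (n - i) m) := by
    intro i _
    rw [genLah_succ]
    ring
  have e2 : ∀ i ∈ range (n+1),
      ((n.choose i : R)) * genLah a b r i k * genLah a b s (n + 1 - i) m
      = (if m = 0 then (0:R) else 1) * (((n.choose i : R)) * genLah a b r i k * genLah a b s (n - i) (m-1))
        + (a * ((n:R) - (i:R)) + b * (m:R) + (a+b) * (s:R)) * (((n.choose i : R)) * genLah a b r i k * genLah a b s (n - i) m) := by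
    intro i hi
    have hi' : i ≤ n := by simp at hi; omega
    have e : n + 1 - i = (n - i) + 1 := by omega
    rw [e, genLah_succ, Nat.cast_sub hi']
    ring
  rw [Finset.sum_congr rfl e1, Finset.sum_congr rfl e2, Finset.sum_add_distrib, Finset.sum_add_distrib,
      ← Finset.mul_sum, ← Finset.mul_sum]
  have e3 : ∑ i ∈ range (n+1), (a * (i:R) + b * (k:R) + (a+b) * (r:R)) * (((n.choose i : R)) * genLah a b r i k * genLah a b s (n - i) m)
      + ∑ i ∈ range (n+1), (a * ((n:R) - (i:R)) + b * (m:R) + (a+b) * (s:R)) * (((n.choose i : R)) * genLah a b r i k * genLah a b s (n - i) m)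
      = (a * (n:R) + b * ((k:R) + (m:R)) + (a + b) * ((r:R) + (s:R))) *
        ∑ i ∈ range (n + 1), ((n.choose i : R)) * genLah a b r i k * genLah a b s (n - i) m := by
    rw [← Finset.sum_add_distrib, Finset.mul_sum]
    refine Finset.sum_congr rfl fun i _ => by ring
  linear_combination e3

lemma genLah_conv_range {R : Type*} [CommRing R] (a b : R) (r s : ℕ) :
    ∀ n k m : ℕ,
    ((k + m).choose k : R) * genLah a b (r + s) n (k + m) =
      ∑ i ∈ range (n + 1), (n.choose i : R) * genLah a b r i k * genLah a b s (n - i) m := by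
  intro n
  induction n with
  | zero =>
    intro k m
    rcases k with _ | k
    · rcases m with _ | m <;> simp [genLah]
    · rw [genLah_eq_zero a b (r+s) 0 (k+1+m) (by omega)]
      simp [genLah_eq_zero a b r 0 (k+1) (by omega)]
  | succ n ih =>
    intro k m
    rw [genLah_sum_step a b r s n k m, ← ih (k-1) m, ← ih k (m-1), ← ih k m, genLah_succ]
    rcases k with _ | k <;> rcases m with _ | m
    · simp
    · simp only [Nat.zero_add, Nat.add_sub_cancel, Nat.succ_ne_zero, if_false, if_true,
        reduceIte, Nat.choose_zero_right, Nat.sub_zero]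
      push_cast
      ring
    · simp only [Nat.add_zero, Nat.add_sub_cancel, Nat.succ_ne_zero, if_false, reduceIte,
        Nat.choose_self, Nat.sub_zero, Nat.choose_zero_right]
      push_cast
      simp [Nat.choose_self]
    · rw [if_neg (by omega : ¬(k+1+(m+1) = 0)), if_neg (Nat.succ_ne_zero k),
          if_neg (Nat.succ_ne_zero m),
          show k+1+(m+1)-1 = k+(m+1) from by omega,
          show k+1-1+(m+1) = k+(m+1) from by omega,
          show k+1-1 = k from by omega,
          show k+1+(m+1-1) = k+(m+1) from by omega,
          show k+1+(m+1) = (k+(m+1))+1 from by omega,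
          Nat.choose_succ_succ]
      push_cast
      ring

theorem genLah_convolution {R : Type*} [CommRing R] (a b : R) (r s n m k : ℕ)
    (h : k + m ≤ n) :
    ((k + m).choose k : R) * genLah a b (r + s) n (k + m) =
      ∑ i ∈ Icc k (n - m), (n.choose i : R) * genLah a b r i k * genLah a b s (n - i) m := by
  rw [genLah_conv_range a b r s n k m]
  refine (Finset.sum_subset ?_ ?_).symm
  · intro i hi
    simp only [Finset.mem_Icc] at hi
    simp only [Finset.mem_range]
    omega
  · intro i hi hni
    simp only [Finset.mem_range] at hi
    simp only [Finset.mem_Icc, not_and, not_le] at hni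
    rcases Nat.lt_or_ge i k with hik | hik
    · rw [genLah_eq_zero a b r i k hik]
      ring
    · rw [genLah_eq_zero a b s (n - i) m (by have := hni hik; omega)]
      ring
end

section
/- For 0 ≤ k ≤ n and r ≥ 0, the generalized r-Lah numbers satisfy the orthogonality relation δ_{n,k} = Σ_{j=k}^{n} (−1)^{j−k} · G_{a,b}(n,j;r) · G_{b,a}(j,k;r). -/
open Finset

lemma genLah_zero {R : Type*} [CommRing R] (a b : R) (r : ℕ) :
    ∀ n k, n < k → genLah a b r n k = 0 := by
  intro n
  induction n with
  | zero => intro k hk; match k, hk with | k+1, _ => rfl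
  | succ n ih =>
    intro k hk
    match k, hk with
    | k+1, hk =>
      show genLah a b r n k + _ * genLah a b r n (k+1) = 0
      rw [ih k (by omega), ih (k+1) (by omega), mul_zero, add_zero]

lemma genLah_key {R : Type*} [CommRing R] (a b : R) (r : ℕ) :
    ∀ n k, ∑ j ∈ range (n+1), (-1:R)^(j-k) * genLah a b r n j * genLah b a r j k
      = if n = k then 1 else 0 := by
  intro n
  induction n with
  | zero =>
    intro k
    match k with
    | 0 => simp [genLah]
    | k+1 => simp [genLah, show genLah b a r 0 (k+1) = 0 from rfl]
  | succ n ih =>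
    intro k
    match k with
    | 0 =>
      rw [Finset.sum_range_succ']
      simp only [Nat.sub_zero]
      -- summand j ↦ (-1)^(j+1) * genLah a b r (n+1) (j+1) * genLah b a r (j+1) 0
      have hstep : ∀ j ∈ range (n+1),
          (-1:R)^(j+1) * genLah a b r (n+1) (j+1) * genLah b a r (j+1) 0
          = (-((-1:R)^j * ((b*(j:R) + b*(r:R) + a*(r:R)) * (genLah a b r n j * genLah b a r j 0))))
            + (-1:R)^(j+1) * ((a*(n:R) + b*((j:R)+1) + (a+b)*(r:R)) *
                (genLah a b r n (j+1) * genLah b a r (j+1) 0)) := by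
        intro j _
        rw [show genLah a b r (n+1) (j+1) = genLah a b r n j +
              (a * (n:R) + b * ((j:R) + 1) + (a + b) * (r:R)) * genLah a b r n (j+1) from rfl]
        rw [show genLah b a r (j+1) 0 = (b * ((j:R) + (r:R)) + a * (r:R)) * genLah b a r j 0 from rfl]
        ring
      rw [Finset.sum_congr rfl hstep, Finset.sum_add_distrib]
      -- handle the shifted sum
      set w : ℕ → R := fun j => (-1:R)^j * ((a*(n:R) + b*(j:R) + (a+b)*(r:R)) *
          (genLah a b r n j * genLah b a r j 0)) with hw
      have hv : ∀ j ∈ range (n+1),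
          (-1:R)^(j+1) * ((a*(n:R) + b*((j:R)+1) + (a+b)*(r:R)) *
            (genLah a b r n (j+1) * genLah b a r (j+1) 0)) = w (j+1) := by
        intro j _; simp only [hw]; push_cast; ring
      rw [Finset.sum_congr rfl hv]
      have e1 := Finset.sum_range_succ' w (n+1)
      have e2 := Finset.sum_range_succ w (n+1)
      have hwn : w (n+1) = 0 := by
        simp only [hw, genLah_zero a b r n (n+1) (by omega)]; ring
      have hshift : ∑ j ∈ range (n+1), w (j+1) = (∑ j ∈ range (n+1), w j) - w 0 := by
        rw [e2] at e1; linear_combination hwn - e1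
      rw [hshift]
      have hcomb : ∑ j ∈ range (n+1),
          ((-((-1:R)^j * ((b*(j:R) + b*(r:R) + a*(r:R)) * (genLah a b r n j * genLah b a r j 0))))
            + w j)
          = a * (n:R) * ∑ j ∈ range (n+1), (-1:R)^(j-0) * genLah a b r n j * genLah b a r j 0 := by
        rw [Finset.mul_sum]
        refine Finset.sum_congr rfl fun j _ => ?_
        simp only [hw, Nat.sub_zero]; ring
      have key2 : (∑ j ∈ range (n+1),
          (-((-1:R)^j * ((b*(j:R) + b*(r:R) + a*(r:R)) * (genLah a b r n j * genLah b a r j 0)))))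
          + ∑ j ∈ range (n+1), w j = 0 := by
        rw [← Finset.sum_add_distrib, hcomb, ih 0]
        match n with
        | 0 => simp
        | n+1 => simp
      have hw0 : w 0 = (a*(n:R) + (a+b)*(r:R)) * genLah a b r n 0 := by
        simp only [hw]
        rw [show genLah b a r 0 0 = (1:R) from rfl]
        push_cast; ring
      have hG0 : genLah a b r (n+1) 0 = (a * ((n : R) + (r : R)) + b * (r : R)) * genLah a b r n 0 := rfl
      rw [show genLah b a r 0 0 = (1:R) from rfl, hG0, hw0]
      rw [if_neg (by omega)]
      linear_combination key2
    | m+1 =>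
      rw [Finset.sum_range_succ']
      simp only [Nat.succ_sub_succ]
      rw [show genLah b a r 0 (m+1) = 0 from rfl, mul_zero, add_zero]
      have hstep : ∀ j ∈ range (n+1),
          (-1:R)^(j-m) * genLah a b r (n+1) (j+1) * genLah b a r (j+1) (m+1)
          = (((-1:R)^(j-m) * genLah a b r n j * genLah b a r j m)
              + (-1:R)^(j-m) * ((b*(j:R) + a*((m:R)+1) + (b+a)*(r:R)) *
                  (genLah a b r n j * genLah b a r j (m+1))))
            + (-1:R)^(j-m) * ((a*(n:R) + b*((j:R)+1) + (a+b)*(r:R)) *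
                (genLah a b r n (j+1) * genLah b a r (j+1) (m+1))) := by
        intro j _
        rw [show genLah a b r (n+1) (j+1) = genLah a b r n j +
              (a * (n:R) + b * ((j:R) + 1) + (a + b) * (r:R)) * genLah a b r n (j+1) from rfl]
        rw [show genLah b a r (j+1) (m+1) = genLah b a r j m +
              (b * (j:R) + a * ((m:R) + 1) + (b + a) * (r:R)) * genLah b a r j (m+1) from rfl]
        ring
      rw [Finset.sum_congr rfl hstep, Finset.sum_add_distrib, Finset.sum_add_distrib]
      set w : ℕ → R := fun j => (-1:R)^(j-(m+1)) * ((a*(n:R) + b*(j:R) + (a+b)*(r:R)) *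
          (genLah a b r n j * genLah b a r j (m+1))) with hw
      have hv : ∀ j ∈ range (n+1),
          (-1:R)^(j-m) * ((a*(n:R) + b*((j:R)+1) + (a+b)*(r:R)) *
            (genLah a b r n (j+1) * genLah b a r (j+1) (m+1))) = w (j+1) := by
        intro j _
        simp only [hw, Nat.succ_sub_succ]
        push_cast; ring
      rw [Finset.sum_congr rfl hv]
      have e1 := Finset.sum_range_succ' w (n+1)
      have e2 := Finset.sum_range_succ w (n+1)
      have hwn : w (n+1) = 0 := by
        simp only [hw, genLah_zero a b r n (n+1) (by omega)]; ring
      have hw0 : w 0 = 0 := by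
        simp only [hw, show genLah b a r 0 (m+1) = 0 from rfl]; ring
      have hshift : ∑ j ∈ range (n+1), w (j+1) = ∑ j ∈ range (n+1), w j := by
        rw [e2] at e1; linear_combination hwn - hw0 - e1
      rw [hshift]
      have hcomb : ∀ j ∈ range (n+1),
          ((-1:R)^(j-m) * ((b*(j:R) + a*((m:R)+1) + (b+a)*(r:R)) *
              (genLah a b r n j * genLah b a r j (m+1)))) + w j
          = (a*(n:R) - a*((m:R)+1)) *
              ((-1:R)^(j-(m+1)) * genLah a b r n j * genLah b a r j (m+1)) := by
        intro j _
        simp only [hw]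
        rcases le_or_gt (m+1) j with h | h
        · have hj : j - m = (j - (m+1)) + 1 := by omega
          rw [hj, pow_succ]; ring
        · rw [genLah_zero b a r j (m+1) h]; ring
      have key2 : (∑ j ∈ range (n+1), ((-1:R)^(j-m) * ((b*(j:R) + a*((m:R)+1) + (b+a)*(r:R)) *
              (genLah a b r n j * genLah b a r j (m+1)))))
          + ∑ j ∈ range (n+1), w j = 0 := by
        rw [← Finset.sum_add_distrib, Finset.sum_congr rfl hcomb, ← Finset.mul_sum, ih (m+1)]
        by_cases h : n = m+1
        · subst h; rw [if_pos rfl]; push_cast; ring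
        · rw [if_neg h, mul_zero]
      rw [ih m] at *
      rw [show ((if n+1 = m+1 then (1:R) else 0) = if n = m then 1 else 0) by
        by_cases h : n = m <;> simp [h]]
      linear_combination key2

theorem genLah_orthogonality {R : Type*} [CommRing R] (a b : R) (r n k : ℕ) (hkn : k ≤ n) :
    (if n = k then (1 : R) else 0) =
      ∑ j ∈ Icc k n, (-1) ^ (j - k) * genLah a b r n j * genLah b a r j k := by
  have hsub : ∑ j ∈ Icc k n, (-1:R) ^ (j - k) * genLah a b r n j * genLah b a r j k
      = ∑ j ∈ range (n+1), (-1:R) ^ (j - k) * genLah a b r n j * genLah b a r j k := by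
    refine Finset.sum_subset (fun x hx => ?_) (fun x hx hnx => ?_)
    · simp only [mem_Icc] at hx; simp only [mem_range]; omega
    · have hxk : x < k := by
        simp only [mem_Icc, mem_range] at hx hnx; omega
      rw [genLah_zero b a r x k hxk, mul_zero]
  rw [hsub, genLah_key a b r n k]
end
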